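/- arXiv:1306.1629 — 2 statements merged into one kernel-verified Lean document; each statement's English description precedes it below -/
import Mathlib

section
/- For two r-dimensional subspaces of ℝⁿ spanned by orthonormal bases {a₁,…,a_r} and {b₁,…,b_r} that are in biorthogonal (principal vector) position—meaning ⟪a_k, b_l⟫ = 0 and ⟪a_k, a_l⟫ = ⟪b_k, b_l⟫ = δ_{kl} for k ≠ l—the scalar part of the Clifford algebra product (a₁⋯a_r)·(b_r⋯b₁) equals the product ∏_k ⟪a_k, b_k⟫ of the cosines of the principal angles. -/
/-- The scalar (grade-0) part of an element of a Clifford algebra, obtained via the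
canonical linear isomorphism with the exterior algebra. -/
noncomputable def scalarPart {V : Type*} [AddCommGroup V] [Module ℝ V]
    (Q : QuadraticForm ℝ V) : CliffordAlgebra Q →ₗ[ℝ] ℝ :=
  (ExteriorAlgebra.algebraMapInv (R := ℝ) (M := V)).toLinearMap ∘ₗ
    (CliffordAlgebra.equivExterior Q).toLinearMap

namespace Stmt17Aux

open CliffordAlgebra

variable {n : ℕ}

local notation "V" => EuclideanSpace ℝ (Fin n)

/-- Clifford product of a list of vectors. -/
noncomputable def clp (Q : QuadraticForm ℝ V) (l : List V) : CliffordAlgebra Q :=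
  (l.map (ι Q)).prod

lemma clp_nil (Q : QuadraticForm ℝ V) : clp Q [] = 1 := rfl

lemma clp_cons (Q : QuadraticForm ℝ V) (v : V) (l : List V) :
    clp Q (v :: l) = ι Q v * clp Q l := by simp [clp]

lemma clp_append (Q : QuadraticForm ℝ V) (l₁ l₂ : List V) :
    clp Q (l₁ ++ l₂) = clp Q l₁ * clp Q l₂ := by simp [clp]

/-- Exterior product of a list of vectors. -/
noncomputable def elp (l : List V) : ExteriorAlgebra ℝ V :=
  (l.map (ExteriorAlgebra.ι ℝ)).prod

lemma my_polar_eq (Q : QuadraticForm ℝ V) (hQ : ∀ v : V, Q v = ‖v‖ ^ 2) (u v : V) :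
    QuadraticMap.polar Q u v = 2 * (inner ℝ u v : ℝ) := by
  simp only [QuadraticMap.polar, hQ]
  rw [norm_add_sq_real]; ring

lemma my_anticomm (Q : QuadraticForm ℝ V) (hQ : ∀ v : V, Q v = ‖v‖ ^ 2)
    {u v : V} (h : (inner ℝ u v : ℝ) = 0) :
    ι Q u * ι Q v = -(ι Q v * ι Q u) := by
  rw [CliffordAlgebra.ι_mul_ι_comm, my_polar_eq Q hQ, h, mul_zero, map_zero, zero_sub]

lemma my_B_eq (Q : QuadraticForm ℝ V) (hQ : ∀ v : V, Q v = ‖v‖ ^ 2) (u v : V) :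
    QuadraticMap.associated (R := ℝ) (-Q) u v = -(inner ℝ u v : ℝ) := by
  have h2 := QuadraticMap.two_nsmul_associated ℝ (-Q)
  have h3 := congrArg (fun B => B u v) h2
  simp only [LinearMap.smul_apply, QuadraticMap.polarBilin_apply_apply] at h3
  rw [show ⇑(-Q) = -⇑Q from rfl, QuadraticMap.polar_neg, my_polar_eq Q hQ] at h3
  have h4 : (2 : ℕ) • (QuadraticMap.associated (R := ℝ) (-Q) u v)
      = 2 * (QuadraticMap.associated (R := ℝ) (-Q) u v) := by
    simp [nsmul_eq_mul]
  rw [h4] at h3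
  linarith

lemma my_equivExterior_eq (Q : QuadraticForm ℝ V) (x : CliffordAlgebra Q) :
    CliffordAlgebra.equivExterior Q x =
      CliffordAlgebra.changeForm CliffordAlgebra.changeForm.associated_neg_proof x := rfl

lemma clp_mul_ι (Q : QuadraticForm ℝ V) (hQ : ∀ v : V, Q v = ‖v‖ ^ 2) (v : V) :
    ∀ (l : List V), (∀ u ∈ l, (inner ℝ u v : ℝ) = 0) →
      clp Q l * ι Q v = ((-1 : ℝ) ^ l.length) • (ι Q v * clp Q l)
  | [], _ => by simp [clp_nil]
  | u :: t, h => by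
    have ht := clp_mul_ι Q hQ v t (fun w hw => h w (List.mem_cons_of_mem _ hw))
    have hu : ι Q u * ι Q v = -(ι Q v * ι Q u) :=
      my_anticomm Q hQ (h u (List.mem_cons_self))
    rw [clp_cons, List.length_cons, mul_assoc, ht, mul_smul_comm, ← mul_assoc, hu,
      neg_mul, smul_neg, mul_assoc, ← clp_cons, pow_succ, mul_comm _ (-1 : ℝ),
      neg_one_mul, neg_smul]

/-- Commutation past an even-length orthogonal list. -/
lemma ι_mul_clp (Q : QuadraticForm ℝ V) (hQ : ∀ v : V, Q v = ‖v‖ ^ 2) (v : V)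
    (l : List V) (hlen : Even l.length) (h : ∀ u ∈ l, (inner ℝ u v : ℝ) = 0) :
    ι Q v * clp Q l = clp Q l * ι Q v := by
  rw [clp_mul_ι Q hQ v l h, hlen.neg_one_pow, one_smul]

lemma contract_elp (d : Module.Dual ℝ V) :
    ∀ (l : List V), (∀ u ∈ l, d u = 0) →
      CliffordAlgebra.contractLeft (Q := (0 : QuadraticForm ℝ V)) d (elp l) = 0
  | [], _ => by simp [elp, CliffordAlgebra.contractLeft_one]
  | u :: t, h => by
    have ht := contract_elp d t (fun w hw => h w (List.mem_cons_of_mem _ hw))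
    have he : elp (u :: t) = ι (0 : QuadraticForm ℝ V) u * elp t := by simp [elp]
    rw [he, CliffordAlgebra.contractLeft_ι_mul, h u (List.mem_cons_self), ht,
      zero_smul, mul_zero, sub_zero]

lemma equivExterior_clp (Q : QuadraticForm ℝ V) (hQ : ∀ v : V, Q v = ‖v‖ ^ 2) :
    ∀ (l : List V), l.Pairwise (fun u v => (inner ℝ u v : ℝ) = 0) →
      CliffordAlgebra.equivExterior Q (clp Q l) = elp l
  | [], _ => by
    rw [show clp Q [] = 1 from rfl, my_equivExterior_eq, CliffordAlgebra.changeForm_one]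
    rfl
  | u :: t, h => by
    rw [List.pairwise_cons] at h
    have ht := equivExterior_clp Q hQ t h.2
    rw [my_equivExterior_eq] at ht ⊢
    rw [show clp Q (u :: t) = ι Q u * clp Q t by simp [clp],
      CliffordAlgebra.changeForm_ι_mul, ht]
    have h2 : CliffordAlgebra.contractLeft (Q := (0 : QuadraticForm ℝ V))
        (QuadraticMap.associated (R := ℝ) (-Q) u) (elp t) = 0 := by
      refine contract_elp _ t fun w hw => ?_
      rw [my_B_eq Q hQ, h.1 w hw, neg_zero]
    rw [h2, sub_zero]
    simp [elp]

lemma scalarPart_apply (Q : QuadraticForm ℝ V) (x : CliffordAlgebra Q) :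
    scalarPart Q x = ExteriorAlgebra.algebraMapInv (CliffordAlgebra.equivExterior Q x) := rfl

lemma scalarPart_one (Q : QuadraticForm ℝ V) :
    scalarPart Q (1 : CliffordAlgebra Q) = 1 := by
  rw [scalarPart_apply, my_equivExterior_eq, CliffordAlgebra.changeForm_one, map_one]

lemma scalarPart_clp_cons (Q : QuadraticForm ℝ V) (hQ : ∀ v : V, Q v = ‖v‖ ^ 2)
    (u : V) (t : List V) (h : (u :: t).Pairwise (fun u v => (inner ℝ u v : ℝ) = 0)) :
    scalarPart Q (clp Q (u :: t)) = 0 := by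
  rw [scalarPart_apply, equivExterior_clp Q hQ _ h,
    show elp (u :: t) = ExteriorAlgebra.ι ℝ u * elp t by simp [elp], map_mul]
  simp [ExteriorAlgebra.algebraMapInv]

lemma main_aux (Q : QuadraticForm ℝ V) (hQ : ∀ v : V, Q v = ‖v‖ ^ 2) :
    ∀ (r : ℕ) (a b : Fin r → V),
    (∀ k l : Fin r, k ≠ l →
      (inner ℝ (a k) (a l) : ℝ) = 0 ∧ (inner ℝ (a k) (b l) : ℝ) = 0 ∧
        (inner ℝ (b k) (b l) : ℝ) = 0) →
    (∀ k : Fin r, ‖a k‖ = 1 ∧ ‖b k‖ = 1) →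
    ∀ (L : List V),
    (∀ k : Fin r, ∀ v ∈ L, (inner ℝ (a k) v : ℝ) = 0 ∧ (inner ℝ (b k) v : ℝ) = 0) →
    L.Pairwise (fun u v => (inner ℝ u v : ℝ) = 0) →
    scalarPart Q (clp Q (List.ofFn a ++ (List.ofFn b).reverse ++ L)) =
      (∏ k : Fin r, (inner ℝ (a k) (b k) : ℝ)) * scalarPart Q (clp Q L)
  | 0, a, b, _, _, L, _, _ => by
    simp [List.ofFn_zero, clp_append, clp_nil]
  | r + 1, a, b, horth, hunit, L, hL, hLp => by
    set a' : Fin r → V := fun k => a k.succ with ha'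
    set b' : Fin r → V := fun k => b k.succ with hb'
    set c0 : ℝ := (inner ℝ (a 0) (b 0) : ℝ) with hc0
    set u0 : V := b 0 - c0 • a 0 with hu0
    set M : List V := List.ofFn a' ++ (List.ofFn b').reverse with hM
    have hMlen : Even M.length := by
      simp [hM, List.length_append, List.length_reverse, List.length_ofFn]
    have hMmem : ∀ u ∈ M, ((inner ℝ u (a 0) : ℝ) = 0 ∧ (inner ℝ u (b 0) : ℝ) = 0) := by
      intro u hu
      rw [hM, List.mem_append, List.mem_reverse] at hu
      rcases hu with hu | hu <;> rw [List.mem_ofFn] at hu <;> obtain ⟨k, rfl⟩ := hu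
      · have h1 := (horth k.succ 0 (Fin.succ_ne_zero k)).1
        have h2 := (horth k.succ 0 (Fin.succ_ne_zero k)).2.1
        exact ⟨h1, h2⟩
      · have h1 := (horth 0 k.succ (Fin.succ_ne_zero k).symm).2.1
        have h2 := (horth k.succ 0 (Fin.succ_ne_zero k)).2.2
        exact ⟨by rw [real_inner_comm]; exact h1, h2⟩
    have hMu0 : ∀ u ∈ M, (inner ℝ u u0 : ℝ) = 0 := by
      intro u hu
      rw [hu0, inner_sub_right, real_inner_smul_right, (hMmem u hu).1, (hMmem u hu).2]
      ring
    -- the full list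
    have hlist : List.ofFn a ++ (List.ofFn b).reverse ++ L
        = a 0 :: (M ++ (b 0 :: L)) := by
      rw [List.ofFn_succ, List.ofFn_succ (f := b), List.reverse_cons, hM]
      simp [List.append_assoc, ha', hb']
    -- rewrite the Clifford element
    have hclp : clp Q (List.ofFn a ++ (List.ofFn b).reverse ++ L)
        = ι Q (a 0) * (clp Q M * (ι Q (b 0) * clp Q L)) := by
      rw [hlist, clp_cons, clp_append, clp_cons]
    have hcommb : ι Q (b 0) * clp Q M = clp Q M * ι Q (b 0) :=
      ι_mul_clp Q hQ _ M hMlen (fun u hu => (hMmem u hu).2)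
    have hcomma : ι Q (a 0) * clp Q M = clp Q M * ι Q (a 0) :=
      ι_mul_clp Q hQ _ M hMlen (fun u hu => (hMmem u hu).1)
    have hcommu : ι Q u0 * clp Q M = clp Q M * ι Q u0 :=
      ι_mul_clp Q hQ _ M hMlen hMu0
    have hsplit : ι Q (a 0) * ι Q (b 0)
        = ι Q (a 0) * ι Q u0 + c0 • 1 := by
      have hb0 : b 0 = u0 + c0 • a 0 := by rw [hu0]; abel
      rw [hb0, map_add, map_smul, mul_add, mul_smul_comm, ι_sq_scalar,
        hQ, (hunit 0).1, one_pow, map_one]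
    have key : clp Q (List.ofFn a ++ (List.ofFn b).reverse ++ L)
        = clp Q (List.ofFn a' ++ (List.ofFn b').reverse ++ (a 0 :: u0 :: L))
          + c0 • clp Q (List.ofFn a' ++ (List.ofFn b').reverse ++ L) := by
      have e1 : clp Q (List.ofFn a' ++ (List.ofFn b').reverse ++ (a 0 :: u0 :: L))
          = clp Q M * (ι Q (a 0) * (ι Q u0 * clp Q L)) := by
        rw [clp_append, clp_cons, clp_cons, ← hM]
      have e2 : clp Q (List.ofFn a' ++ (List.ofFn b').reverse ++ L)
          = clp Q M * clp Q L := by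
        rw [clp_append, ← hM]
      calc clp Q (List.ofFn a ++ (List.ofFn b).reverse ++ L)
          = ι Q (a 0) * (clp Q M * (ι Q (b 0) * clp Q L)) := hclp
        _ = ι Q (a 0) * (ι Q (b 0) * (clp Q M * clp Q L)) := by
            rw [← mul_assoc (clp Q M), ← hcommb, mul_assoc]
        _ = (ι Q (a 0) * ι Q (b 0)) * (clp Q M * clp Q L) := by
            simp only [mul_assoc]
        _ = (ι Q (a 0) * ι Q u0 + c0 • 1) * (clp Q M * clp Q L) := by rw [hsplit]
        _ = ι Q (a 0) * (ι Q u0 * (clp Q M * clp Q L))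
              + c0 • (clp Q M * clp Q L) := by
            rw [add_mul, smul_mul_assoc, one_mul, mul_assoc]
        _ = ι Q (a 0) * ((ι Q u0 * clp Q M) * clp Q L)
              + c0 • (clp Q M * clp Q L) := by simp only [mul_assoc]
        _ = ι Q (a 0) * ((clp Q M * ι Q u0) * clp Q L)
              + c0 • (clp Q M * clp Q L) := by rw [hcommu]
        _ = (ι Q (a 0) * clp Q M) * (ι Q u0 * clp Q L)
              + c0 • (clp Q M * clp Q L) := by simp only [mul_assoc]
        _ = (clp Q M * ι Q (a 0)) * (ι Q u0 * clp Q L)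
              + c0 • (clp Q M * clp Q L) := by rw [hcomma]
        _ = clp Q M * (ι Q (a 0) * (ι Q u0 * clp Q L))
              + c0 • (clp Q M * clp Q L) := by simp only [mul_assoc]
        _ = _ := by rw [e1, e2]
    have horth' : ∀ k l : Fin r, k ≠ l →
        (inner ℝ (a' k) (a' l) : ℝ) = 0 ∧ (inner ℝ (a' k) (b' l) : ℝ) = 0 ∧
          (inner ℝ (b' k) (b' l) : ℝ) = 0 := fun k l hkl =>
      horth k.succ l.succ (fun h => hkl (Fin.succ_injective _ h))
    have hunit' : ∀ k : Fin r, ‖a' k‖ = 1 ∧ ‖b' k‖ = 1 := fun k => hunit k.succ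
    have hL' : ∀ k : Fin r, ∀ v ∈ L,
        (inner ℝ (a' k) v : ℝ) = 0 ∧ (inner ℝ (b' k) v : ℝ) = 0 := fun k v hv => hL k.succ v hv
    have hsa : ∀ k : Fin r, (inner ℝ (a' k) (a 0) : ℝ) = 0 ∧ (inner ℝ (b' k) (a 0) : ℝ) = 0 :=
      fun k => ⟨(horth k.succ 0 (Fin.succ_ne_zero k)).1,
        by rw [real_inner_comm]; exact (horth 0 k.succ (Fin.succ_ne_zero k).symm).2.1⟩
    have hsb : ∀ k : Fin r, (inner ℝ (a' k) (b 0) : ℝ) = 0 ∧ (inner ℝ (b' k) (b 0) : ℝ) = 0 :=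
      fun k => ⟨(horth k.succ 0 (Fin.succ_ne_zero k)).2.1,
        (horth k.succ 0 (Fin.succ_ne_zero k)).2.2⟩
    have hsu : ∀ k : Fin r, (inner ℝ (a' k) u0 : ℝ) = 0 ∧ (inner ℝ (b' k) u0 : ℝ) = 0 := by
      intro k
      constructor <;>
        rw [hu0, inner_sub_right, real_inner_smul_right]
      · rw [(hsa k).1, (hsb k).1]; ring
      · rw [(hsa k).2, (hsb k).2]; ring
    have hIH2L : ∀ k : Fin r, ∀ v ∈ (a 0 :: u0 :: L),
        (inner ℝ (a' k) v : ℝ) = 0 ∧ (inner ℝ (b' k) v : ℝ) = 0 := by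
      intro k v hv
      rcases List.mem_cons.1 hv with rfl | hv
      · exact hsa k
      rcases List.mem_cons.1 hv with rfl | hv
      · exact hsu k
      · exact hL' k v hv
    have ha0u0 : (inner ℝ (a 0) u0 : ℝ) = 0 := by
      rw [hu0, inner_sub_right, real_inner_smul_right, real_inner_self_eq_norm_sq,
        (hunit 0).1]
      simp [hc0, real_inner_comm]
    have hpair' : (a 0 :: u0 :: L).Pairwise (fun u v => (inner ℝ u v : ℝ) = 0) := by
      refine List.Pairwise.cons ?_ (List.Pairwise.cons ?_ hLp)
      · intro v hv
        rcases List.mem_cons.1 hv with rfl | hv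
        · exact ha0u0
        · exact (hL 0 v hv).1
      · intro v hv
        rw [hu0, inner_sub_left, real_inner_smul_left, (hL 0 v hv).1, (hL 0 v hv).2]
        ring
    rw [key, map_add, map_smul,
      main_aux Q hQ r a' b' horth' hunit' (a 0 :: u0 :: L) hIH2L hpair',
      main_aux Q hQ r a' b' horth' hunit' L hL' hLp,
      scalarPart_clp_cons Q hQ _ _ hpair', Fin.prod_univ_succ]
    simp only [ha', hb', smul_eq_mul, ← hc0]
    ring

end Stmt17Aux

theorem stmt17 (n : ℕ) (Q : QuadraticForm ℝ (EuclideanSpace ℝ (Fin n)))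
    (hQ : ∀ v : EuclideanSpace ℝ (Fin n), Q v = ‖v‖ ^ 2)
    (r : ℕ) (a b : Fin r → EuclideanSpace ℝ (Fin n))
    (horth : ∀ k l : Fin r, k ≠ l →
      (inner ℝ (a k) (a l) : ℝ) = 0 ∧ (inner ℝ (a k) (b l) : ℝ) = 0 ∧
        (inner ℝ (b k) (b l) : ℝ) = 0)
    (hunit : ∀ k : Fin r, ‖a k‖ = 1 ∧ ‖b k‖ = 1) :
    scalarPart Q
        ((List.ofFn fun k => CliffordAlgebra.ι Q (a k)).prod *
          (List.ofFn fun k => CliffordAlgebra.ι Q (b k)).reverse.prod) =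
      ∏ k : Fin r, (inner ℝ (a k) (b k) : ℝ) := by
  have h1 : (List.ofFn fun k => CliffordAlgebra.ι Q (a k)).prod
      = Stmt17Aux.clp Q (List.ofFn a) := by
    simp [Stmt17Aux.clp, List.map_ofFn, Function.comp_def]
  have h2 : (List.ofFn fun k => CliffordAlgebra.ι Q (b k)).reverse.prod
      = Stmt17Aux.clp Q ((List.ofFn b).reverse) := by
    simp [Stmt17Aux.clp, List.map_ofFn, List.map_reverse, Function.comp_def]
  rw [h1, h2, ← Stmt17Aux.clp_append]
  have hmain := Stmt17Aux.main_aux Q hQ r a b horth hunit []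
    (by intro k v hv; simp at hv) List.Pairwise.nil
  rw [List.append_nil] at hmain
  rw [hmain, Stmt17Aux.clp_nil, Stmt17Aux.scalarPart_one, mul_one]
end

section
/- If two r-dimensional subspaces A, B of a Euclidean space have a pair of principal vectors that are orthogonal (some principal angle equals π/2), then the scalar part of A·reverse(B) is zero, where A and B are the blades (products of the respective orthonormal principal bases) representing the subspaces. -/
open CliffordAlgebra

section Aux

variable {V : Type*} [NormedAddCommGroup V] [InnerProductSpace ℝ V]

/-- Span of products of exterior vectors orthogonal to `v`. -/
def expanSub (v : V) : Submodule ℝ (ExteriorAlgebra ℝ V) :=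
  Submodule.span ℝ {x | ∃ L : List V, (∀ w ∈ L, (inner ℝ v w : ℝ) = 0) ∧
    x = (L.map (CliffordAlgebra.ι (0 : QuadraticForm ℝ V))).prod}

lemma mem_expanSub_prod (v : V) (L : List V) (hL : ∀ w ∈ L, (inner ℝ v w : ℝ) = 0) :
    (L.map (CliffordAlgebra.ι (0 : QuadraticForm ℝ V))).prod ∈ expanSub v :=
  Submodule.subset_span ⟨L, hL, rfl⟩

lemma expanSub_one (v : V) : (1 : ExteriorAlgebra ℝ V) ∈ expanSub v := by
  simpa using mem_expanSub_prod v [] (by simp)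

lemma expanSub_mul {v w : V} (hw : (inner ℝ v w : ℝ) = 0) {x : ExteriorAlgebra ℝ V}
    (hx : x ∈ expanSub v) :
    CliffordAlgebra.ι (0 : QuadraticForm ℝ V) w * x ∈ expanSub v := by
  induction hx using Submodule.span_induction with
  | mem x hx =>
    obtain ⟨L, hL, rfl⟩ := hx
    have : CliffordAlgebra.ι (0 : QuadraticForm ℝ V) w *
        (L.map (CliffordAlgebra.ι (0 : QuadraticForm ℝ V))).prod =
        ((w :: L).map (CliffordAlgebra.ι (0 : QuadraticForm ℝ V))).prod := by
      simp
    rw [this]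
    exact mem_expanSub_prod v (w :: L) (by
      intro u hu
      rcases List.mem_cons.mp hu with h | h
      · exact h ▸ hw
      · exact hL u h)
  | zero => simp
  | add y z _ _ hy hz => rw [mul_add]; exact add_mem hy hz
  | smul c y _ hy => rw [mul_smul_comm]; exact Submodule.smul_mem _ _ hy

lemma expanSub_contract (v : V) (g : Module.Dual ℝ V) {x : ExteriorAlgebra ℝ V}
    (hx : x ∈ expanSub v) :
    contractLeft (Q := (0 : QuadraticForm ℝ V)) g x ∈ expanSub v := by
  induction hx using Submodule.span_induction with
  | mem x hx =>
    obtain ⟨L, hL, rfl⟩ := hx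
    induction L with
    | nil => simp
    | cons w L ih =>
      rw [List.map_cons, List.prod_cons, contractLeft_ι_mul]
      refine sub_mem (Submodule.smul_mem _ _ ?_) (expanSub_mul (hL w (List.mem_cons_self)) ?_)
      · exact mem_expanSub_prod v L fun u hu => hL u (List.mem_cons_of_mem _ hu)
      · exact ih fun u hu => hL u (List.mem_cons_of_mem _ hu)
  | zero => simp
  | add y z _ _ hy hz => rw [map_add]; exact add_mem hy hz
  | smul c y _ hy => rw [map_smul]; exact Submodule.smul_mem _ _ hy

lemma algebraMapInv_ι0 (w : V) :
    ExteriorAlgebra.algebraMapInv (CliffordAlgebra.ι (0 : QuadraticForm ℝ V) w) = 0 := by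
  exact ExteriorAlgebra.lift_ι_apply _ _ _ w

lemma algebraMapInv_contract (v : V) (f : Module.Dual ℝ V)
    (hf : ∀ w : V, (inner ℝ v w : ℝ) = 0 → f w = 0) {x : ExteriorAlgebra ℝ V}
    (hx : x ∈ expanSub v) :
    ExteriorAlgebra.algebraMapInv (contractLeft (Q := (0 : QuadraticForm ℝ V)) f x) = 0 := by
  induction hx using Submodule.span_induction with
  | mem x hx =>
    obtain ⟨L, hL, rfl⟩ := hx
    induction L with
    | nil => simp
    | cons w L ih =>
      rw [List.map_cons, List.prod_cons, contractLeft_ι_mul, map_sub, map_smul,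
        hf w (hL w (List.mem_cons_self)), map_mul, algebraMapInv_ι0]
      simp
  | zero => simp
  | add y z _ _ hy hz => rw [map_add, map_add, hy, hz, add_zero]
  | smul c y _ hy => rw [map_smul, map_smul, hy, smul_zero]

variable (Q : QuadraticForm ℝ V) (hQ : ∀ v : V, Q v = ‖v‖ ^ 2)

include hQ in
lemma isOrtho_of_inner {v w : V} (h : (inner ℝ v w : ℝ) = 0) : Q.IsOrtho v w := by
  rw [QuadraticMap.IsOrtho, hQ, hQ, hQ, norm_add_sq_real, h]
  ring

include hQ in
lemma assoc_neg_eq_zero {v w : V} (h : (inner ℝ v w : ℝ) = 0) :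
    QuadraticMap.associated (R := ℝ) (-Q) v w = 0 := by
  have := isOrtho_of_inner Q hQ h
  rw [QuadraticMap.IsOrtho] at this
  simp [QuadraticMap.associated_apply, this, hQ]

lemma changeForm_mem_expanSub (h : (QuadraticMap.associated (R := ℝ) (-Q)).toQuadraticMap
      = 0 - Q) (v : V) (L : List V) (hL : ∀ w ∈ L, (inner ℝ v w : ℝ) = 0) :
    changeForm h ((L.map (CliffordAlgebra.ι Q)).prod) ∈ expanSub v := by
  induction L with
  | nil => simpa using expanSub_one v
  | cons w L ih =>
    rw [List.map_cons, List.prod_cons, changeForm_ι_mul]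
    refine sub_mem (expanSub_mul (hL w (List.mem_cons_self)) ?_) (expanSub_contract v _ ?_) <;>
      exact ih fun u hu => hL u (List.mem_cons_of_mem _ hu)

include hQ in
lemma scalarPart_ι_mul (v : V) (L : List V) (hL : ∀ w ∈ L, (inner ℝ v w : ℝ) = 0) :
    scalarPart Q (CliffordAlgebra.ι Q v * (L.map (CliffordAlgebra.ι Q)).prod) = 0 := by
  have : scalarPart Q (CliffordAlgebra.ι Q v * (L.map (CliffordAlgebra.ι Q)).prod) =
      ExteriorAlgebra.algebraMapInv (changeForm changeForm.associated_neg_proof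
        (CliffordAlgebra.ι Q v * (L.map (CliffordAlgebra.ι Q)).prod)) := rfl
  rw [this, changeForm_ι_mul, map_sub, map_mul, algebraMapInv_ι0, zero_mul, zero_sub,
    algebraMapInv_contract v _ (fun w hw => assoc_neg_eq_zero Q hQ hw)
      (changeForm_mem_expanSub Q _ v L hL), neg_zero]

include hQ in
lemma prod_mul_ι (v : V) (L : List V) (hL : ∀ w ∈ L, (inner ℝ w v : ℝ) = 0) :
    (L.map (CliffordAlgebra.ι Q)).prod * CliffordAlgebra.ι Q v =
      (-1 : ℝ) ^ L.length • (CliffordAlgebra.ι Q v * (L.map (CliffordAlgebra.ι Q)).prod) := by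
  induction L with
  | nil => simp
  | cons w L ih =>
    rw [List.map_cons, List.prod_cons, mul_assoc, ih (fun u hu => hL u (List.mem_cons_of_mem _ hu)),
      mul_smul_comm, ← mul_assoc,
      ι_mul_ι_comm_of_isOrtho (isOrtho_of_inner Q hQ (hL w (List.mem_cons_self))),
      List.length_cons, pow_succ]
    simp [mul_assoc]

end Aux


theorem stmt18 {V : Type*} [NormedAddCommGroup V] [InnerProductSpace ℝ V]
    (Q : QuadraticForm ℝ V) (hQ : ∀ v : V, Q v = ‖v‖ ^ 2)
    (r : ℕ) (a b : Fin r → V)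
    (horth : ∀ k l : Fin r, k ≠ l →
      (inner ℝ (a k) (a l) : ℝ) = 0 ∧ (inner ℝ (a k) (b l) : ℝ) = 0 ∧
        (inner ℝ (b k) (b l) : ℝ) = 0)
    (hunit : ∀ k : Fin r, ‖a k‖ = 1 ∧ ‖b k‖ = 1)
    (j : Fin r) (hj : (inner ℝ (a j) (b j) : ℝ) = 0) :
    scalarPart Q
        ((List.ofFn fun k => CliffordAlgebra.ι Q (a k)).prod *
          (List.ofFn fun k => CliffordAlgebra.ι Q (b k)).reverse.prod) = 0 := by

  classical
  set ι' := CliffordAlgebra.ι Q with hι'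
  -- orthogonality of a j to every vector in play except itself
  have haj_a : ∀ i : Fin r, i ≠ j → (inner ℝ (a j) (a i) : ℝ) = 0 := fun i hi =>
    (horth j i (Ne.symm hi)).1
  have haj_b : ∀ l : Fin r, (inner ℝ (a j) (b l) : ℝ) = 0 := by
    intro l
    by_cases hl : l = j
    · rw [hl]; exact hj
    · exact (horth j l (Ne.symm hl)).2.1
  -- rewrite products as maps of lists
  have h1 : (List.ofFn fun k => ι' (a k)) = (List.ofFn a).map ι' := by
    rw [List.map_ofFn]; rfl
  have h2 : (List.ofFn fun k => ι' (b k)).reverse = ((List.ofFn b).reverse).map ι' := by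
    rw [List.map_reverse, List.map_ofFn]; rfl
  rw [h1, h2, ← List.prod_append, ← List.map_append]
  -- split the `a` list at position `j`
  have hlen : (j : ℕ) < (List.ofFn a).length := by simpa using j.isLt
  have hsplit : List.ofFn a =
      (List.ofFn a).take j ++ a j :: (List.ofFn a).drop (j + 1) := by
    conv_lhs => rw [← List.take_append_drop (j : ℕ) (List.ofFn a)]
    rw [List.drop_eq_getElem_cons hlen, List.getElem_ofFn]
  set L1 : List V := (List.ofFn a).take j with hL1
  set L2 : List V := (List.ofFn a).drop (j + 1) ++ (List.ofFn b).reverse with hL2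
  have hre : List.ofFn a ++ (List.ofFn b).reverse = L1 ++ a j :: L2 := by
    rw [hsplit]; simp [hL1, hL2]
  rw [hre]
  -- membership facts
  have hmemL1 : ∀ w ∈ L1, ∃ i : Fin r, (i : ℕ) < (j : ℕ) ∧ w = a i := by
    intro w hw
    obtain ⟨i, hi, hwi⟩ := List.getElem_of_mem hw
    have hi' : i < (j : ℕ) := by
      simp only [hL1, List.length_take, List.length_ofFn] at hi; omega
    have : L1[i] = a ⟨i, lt_trans hi' j.isLt⟩ := by
      simp only [hL1, List.getElem_take, List.getElem_ofFn]
    exact ⟨⟨i, lt_trans hi' j.isLt⟩, hi', by rw [← hwi, this]⟩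
  have hL1orth : ∀ w ∈ L1, (inner ℝ (a j) w : ℝ) = 0 := by
    intro w hw
    obtain ⟨i, hi, rfl⟩ := hmemL1 w hw
    exact haj_a i (by intro h; rw [h] at hi; omega)
  have hL2orth : ∀ w ∈ L2, (inner ℝ (a j) w : ℝ) = 0 := by
    intro w hw
    rcases List.mem_append.mp hw with hw | hw
    · obtain ⟨i, hi, hwi⟩ := List.getElem_of_mem hw
      have hi' : (j : ℕ) + 1 + i < r := by
        simp only [List.length_drop, List.length_ofFn] at hi; omega
      have : ((List.ofFn a).drop ((j : ℕ) + 1))[i] = a ⟨(j : ℕ) + 1 + i, hi'⟩ := by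
        rw [List.getElem_drop, List.getElem_ofFn]
      rw [← hwi, this]
      exact haj_a _ (by intro h; have := congrArg Fin.val h; simp at this; omega)
    · rw [List.mem_reverse] at hw
      obtain ⟨l, rfl⟩ := List.mem_ofFn.mp hw
      exact haj_b l
  -- move `ι' (a j)` to the front
  have hL1len : L1.length = (j : ℕ) := by
    simp [hL1, min_eq_left (le_of_lt j.isLt)]
  have hmove : ((L1 ++ a j :: L2).map ι').prod =
      (-1 : ℝ) ^ (j : ℕ) • (ι' (a j) * ((L1 ++ L2).map ι').prod) := by
    rw [List.map_append, List.prod_append, List.map_cons, List.prod_cons, ← mul_assoc,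
      prod_mul_ι Q hQ (a j) L1 (fun w hw => by rw [real_inner_comm]; exact hL1orth w hw),
      hL1len, smul_mul_assoc, mul_assoc]
    simp [hι', hL2, List.prod_append, mul_assoc]
  rw [hmove, map_smul, scalarPart_ι_mul Q hQ (a j) (L1 ++ L2) (fun w hw => by
      rcases List.mem_append.mp hw with h | h
      exacts [hL1orth w h, hL2orth w h]), smul_zero]
end
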